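/- Let A, B, C, D be complex matrices of compatible sizes with A, D square. Set H = B A^d, K = A^d C, Z = D − B A^d C, S_A = A A^d (A − C D^d B) A A^d. If K D^π Z^d H = K D^d Z^π H, then S_A has a group inverse and S_A^# = A^d + K Z^d H. -/

import Mathlib

open Matrix Finset

attribute [local instance] Classical.propDecidable

noncomputable def drazin {n : Type*} [Fintype n] [DecidableEq n]
    (A : Matrix n n ℂ) : Matrix n n ℂ :=
  if h : ∃ X : Matrix n n ℂ,
      A * X = X * A ∧ X * A * X = X ∧ ∃ k : ℕ, A ^ (k + 1) * X = A ^ k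
  then h.choose else 0

noncomputable def ind {n : Type*} [Fintype n] [DecidableEq n]
    (A : Matrix n n ℂ) : ℕ :=
  sInf {k : ℕ | (A ^ k).rank = (A ^ (k + 1)).rank}

noncomputable def spi {n : Type*} [Fintype n] [DecidableEq n]
    (A : Matrix n n ℂ) : Matrix n n ℂ :=
  1 - A * drazin A

private lemma drazin_of_pow {ι : Type*} [Fintype ι] [DecidableEq ι]
    (A M : Matrix ι ι ℂ) (r : ℕ) (hAM : A * M = M * A) (hM : A ^ (r + 1) * M = A ^ r) :
    ∃ X : Matrix ι ι ℂ, A * X = X * A ∧ X * A * X = X ∧ ∃ k : ℕ, A ^ (k + 1) * X = A ^ k := by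
  have cAM : Commute A M := hAM
  have key2 : ∀ s : ℕ, A ^ (r + s) * M ^ s = A ^ r := by
    intro s; induction s with
    | zero => simp
    | succ s ih =>
      have h2 : A ^ (r + (s + 1)) = A ^ s * A ^ (r + 1) := by
        rw [← pow_add, show s + (r + 1) = r + (s + 1) from by omega]
      calc A ^ (r + (s + 1)) * M ^ (s + 1)
          = (A ^ s * A ^ (r + 1)) * (M * M ^ s) := by rw [pow_succ' M s, h2]
        _ = A ^ s * ((A ^ (r + 1) * M) * M ^ s) := by
            rw [mul_assoc, mul_assoc]
        _ = A ^ s * (A ^ r * M ^ s) := by rw [hM]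
        _ = (A ^ s * A ^ r) * M ^ s := by rw [mul_assoc]
        _ = A ^ (r + s) * M ^ s := by
            rw [← pow_add, show s + r = r + s from by omega]
        _ = A ^ r := ih
  refine ⟨A ^ r * M ^ (r + 1), ?_, ?_, r, ?_⟩
  · exact ((Commute.refl A).pow_right r).mul_right (cAM.pow_right _)
  · have hswap : M ^ (r + 1) * A = A * M ^ (r + 1) := (cAM.pow_right _).symm
    have hswap2 : M ^ (r + 1) * A ^ r = A ^ r * M ^ (r + 1) :=
      ((cAM.pow_pow _ _)).symm
    calc A ^ r * M ^ (r + 1) * A * (A ^ r * M ^ (r + 1))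
        = A ^ r * (M ^ (r + 1) * A) * (A ^ r * M ^ (r + 1)) := by
          rw [mul_assoc (A ^ r)]
      _ = A ^ r * (A * M ^ (r + 1)) * (A ^ r * M ^ (r + 1)) := by rw [hswap]
      _ = A ^ r * A * ((M ^ (r + 1) * A ^ r) * M ^ (r + 1)) := by
          simp only [mul_assoc]
      _ = A ^ r * A * ((A ^ r * M ^ (r + 1)) * M ^ (r + 1)) := by rw [hswap2]
      _ = ((A ^ r * A) * A ^ r) * (M ^ (r + 1) * M ^ (r + 1)) := by
          simp only [mul_assoc]
      _ = (A ^ (r + (r + 1)) * M ^ (r + 1)) * M ^ (r + 1) := by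
          rw [← pow_succ, ← pow_add, show r + 1 + r = r + (r + 1) from by omega, mul_assoc]
      _ = A ^ r * M ^ (r + 1) := by rw [key2 (r + 1)]
  · calc A ^ (r + 1) * (A ^ r * M ^ (r + 1))
        = (A ^ (r + 1) * A ^ r) * M ^ (r + 1) := by rw [mul_assoc]
      _ = A ^ (r + (r + 1)) * M ^ (r + 1) := by
          rw [← pow_add, show r + 1 + r = r + (r + 1) from by omega]
      _ = A ^ r := key2 (r + 1)

open Polynomial in
lemma exists_drazin {ι : Type*} [Fintype ι] [DecidableEq ι] (A : Matrix ι ι ℂ) :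
    ∃ X : Matrix ι ι ℂ, A * X = X * A ∧ X * A * X = X ∧ ∃ k : ℕ, A ^ (k + 1) * X = A ^ k := by
  classical
  have hχ0 : A.charpoly ≠ 0 := A.charpoly_monic.ne_zero
  set r := rootMultiplicity 0 A.charpoly with hr
  set g : ℂ[X] := A.charpoly /ₘ (X - C 0) ^ r with hg
  have hfac : (X - C 0) ^ r * g = A.charpoly :=
    pow_mul_divByMonic_rootMultiplicity_eq _ 0
  have hc0 : g.eval 0 ≠ 0 := eval_divByMonic_pow_rootMultiplicity_ne_zero 0 hχ0
  have hχeq : A.charpoly = X ^ (r + 1) * g.divX + C (g.eval 0) * X ^ r := by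
    have h1 : X * g.divX + C (g.eval 0) = g := by
      rw [← coeff_zero_eq_eval_zero]; exact X_mul_divX_add g
    calc A.charpoly = (X - C 0) ^ r * g := hfac.symm
      _ = X ^ r * (X * g.divX + C (g.eval 0)) := by rw [h1, map_zero, sub_zero]
      _ = X ^ (r + 1) * g.divX + C (g.eval 0) * X ^ r := by ring
  have h0 : (aeval A) A.charpoly = 0 := A.aeval_self_charpoly
  rw [hχeq] at h0
  simp only [map_add, _root_.map_mul, map_pow, aeval_X, aeval_C] at h0
  set Gd := (aeval A) g.divX with hGd
  have hcomm : A * Gd = Gd * A := by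
    calc A * Gd = aeval A (X * g.divX) := by rw [_root_.map_mul, aeval_X]
      _ = aeval A (g.divX * X) := by rw [mul_comm]
      _ = Gd * A := by rw [_root_.map_mul, aeval_X]
  set c := g.eval 0 with hc
  have h1 : A ^ (r + 1) * Gd = -(c • A ^ r) := by
    have h2 := eq_neg_of_add_eq_zero_left h0
    rwa [← Algebra.smul_def] at h2
  set M := (-(c⁻¹)) • Gd with hMdef
  have hM : A ^ (r + 1) * M = A ^ r := by
    rw [hMdef, mul_smul_comm, h1, smul_neg, neg_smul, neg_neg, smul_smul,
      inv_mul_cancel₀ hc0, one_smul]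
  have hAM : A * M = M * A := by
    rw [hMdef, mul_smul_comm, smul_mul_assoc, hcomm]
  exact drazin_of_pow A M r hAM hM

lemma drazin_spec {ι : Type*} [Fintype ι] [DecidableEq ι] (A : Matrix ι ι ℂ) :
    A * drazin A = drazin A * A ∧ drazin A * A * drazin A = drazin A ∧
      ∃ k : ℕ, A ^ (k + 1) * drazin A = A ^ k := by
  have h := exists_drazin A
  unfold drazin
  rw [dif_pos h]
  exact h.choose_spec

lemma idem_eq_zero_of_trace_eq_zero {ι : Type*} [Fintype ι] [DecidableEq ι]
    (Q : Matrix ι ι ℂ) (h1 : Q * Q = Q) (h2 : Q.trace = 0) : Q = 0 := by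
  classical
  have hff : Matrix.toLin' Q ∘ₗ Matrix.toLin' Q = Matrix.toLin' Q := by
    rw [← Matrix.toLin'_mul, h1]
  obtain ⟨p, hp⟩ := (LinearMap.isProj_iff_isIdempotentElem _).mpr hff
  have htr : LinearMap.trace ℂ _ (Matrix.toLin' Q) = (Module.finrank ℂ p : ℂ) := hp.trace
  have htr2 : LinearMap.trace ℂ _ (Matrix.toLin' Q) = Q.trace := by
    rw [LinearMap.trace_eq_matrix_trace ℂ (Pi.basisFun ℂ ι),
      LinearMap.toMatrix_eq_toMatrix', LinearMap.toMatrix'_toLin']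
  have h3 : (Module.finrank ℂ p : ℂ) = 0 := by rw [← htr, htr2, h2]
  have h4 : Module.finrank ℂ p = 0 := by exact_mod_cast h3
  have h5 : p = ⊥ := Submodule.finrank_eq_zero.mp h4
  have h6 : Matrix.toLin' Q = 0 := by
    apply LinearMap.ext; intro x
    have hm := hp.map_mem x
    rw [h5] at hm
    simpa using hm
  exact Matrix.toLin'.injective (h6.trans (LinearEquiv.map_zero _).symm)

private lemma core {n m : Type} [Fintype n] [Fintype m] [DecidableEq n] [DecidableEq m]
    (A a : Matrix n n ℂ) (D d Z z : Matrix m m ℂ) (B : Matrix m n ℂ) (C : Matrix n m ℂ)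
    (hAa : A * a = a * A) (haAa : a * A * a = a)
    (hDd : D * d = d * D)
    (hZ : Z = D - B * a * C)
    (h : a * C * (1 - D * d) * z * (B * a) = a * C * d * (1 - Z * z) * (B * a)) :
    A * a * (A - C * d * B) * (A * a) * (a + a * C * z * (B * a)) = A * a := by
  subst hZ
  have rw1 : ∀ {p : Type} (X : Matrix n p ℂ), a * (A * X) = A * (a * X) := by
    intro p X
    rw [← Matrix.mul_assoc, ← hAa, Matrix.mul_assoc]
  have rw2 : ∀ {p : Type} (X : Matrix n p ℂ), A * (a * (a * X)) = a * X := by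
    intro p X
    rw [← Matrix.mul_assoc, ← Matrix.mul_assoc, hAa, haAa]
  have rw2' : A * (a * a) = a := by
    rw [← Matrix.mul_assoc, hAa, haAa]
  have rwD : ∀ {p : Type} (X : Matrix m p ℂ), d * (D * X) = D * (d * X) := by
    intro p X
    rw [← Matrix.mul_assoc, ← hDd, Matrix.mul_assoc]
  simp only [Matrix.mul_sub, Matrix.sub_mul, Matrix.mul_add, Matrix.add_mul,
    Matrix.mul_one, Matrix.one_mul, Matrix.mul_assoc, rw1, rw2, rw2', rwD] at h ⊢
  have h0 : a * (C * (z * (B * a))) - a * (C * (d * (B * a))) -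
      a * (C * (d * (B * (a * (C * (z * (B * a))))))) = 0 := by
    calc a * (C * (z * (B * a))) - a * (C * (d * (B * a))) -
        a * (C * (d * (B * (a * (C * (z * (B * a)))))))
        = (a * (C * (z * (B * a))) - a * (C * (D * (d * (z * (B * a)))))) -
          (a * (C * (d * (B * a))) -
            (a * (C * (D * (d * (z * (B * a))))) -
              a * (C * (d * (B * (a * (C * (z * (B * a))))))))) := by abel
      _ = 0 := by rw [h]; exact sub_self _
  calc A * a - A * (a * (C * (d * (B * a)))) +
      (A * (a * (C * (z * (B * a)))) - A * (a * (C * (d * (B * (a * (C * (z * (B * a)))))))))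
      = A * a + A * (a * (C * (z * (B * a))) - a * (C * (d * (B * a))) -
          a * (C * (d * (B * (a * (C * (z * (B * a)))))))) := by
        rw [Matrix.mul_sub, Matrix.mul_sub]; abel
    _ = A * a := by rw [h0, Matrix.mul_zero, add_zero]

theorem stmt4 {n m : ℕ} (A : Matrix (Fin n) (Fin n) ℂ) (D : Matrix (Fin m) (Fin m) ℂ)
    (C : Matrix (Fin n) (Fin m) ℂ) (B : Matrix (Fin m) (Fin n) ℂ)
    (H : Matrix (Fin m) (Fin n) ℂ) (hH : H = B * drazin A)
    (K : Matrix (Fin n) (Fin m) ℂ) (hK : K = drazin A * C)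
    (Z : Matrix (Fin m) (Fin m) ℂ) (hZ : Z = D - B * drazin A * C)
    (SA : Matrix (Fin n) (Fin n) ℂ)
    (hSA : SA = A * drazin A * (A - C * drazin D * B) * (A * drazin A))
    (h : K * spi D * drazin Z * H = K * drazin D * spi Z * H) :
    SA * (drazin A + K * drazin Z * H) * SA = SA ∧
    (drazin A + K * drazin Z * H) * SA * (drazin A + K * drazin Z * H) =
      drazin A + K * drazin Z * H ∧
    SA * (drazin A + K * drazin Z * H) = (drazin A + K * drazin Z * H) * SA := by
  obtain ⟨hAa, haAa, -⟩ := drazin_spec A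
  obtain ⟨hDd, -, -⟩ := drazin_spec D
  have rw1 : ∀ {p : Type} (X : Matrix (Fin n) p ℂ),
      drazin A * (A * X) = A * (drazin A * X) := by
    intro p X
    rw [← Matrix.mul_assoc, ← hAa, Matrix.mul_assoc]
  have rw2 : ∀ {p : Type} (X : Matrix (Fin n) p ℂ),
      A * (drazin A * (drazin A * X)) = drazin A * X := by
    intro p X
    rw [← Matrix.mul_assoc, ← Matrix.mul_assoc, hAa, haAa]
  have rw2' : A * (drazin A * drazin A) = drazin A := by
    rw [← Matrix.mul_assoc, hAa, haAa]
  have hSG : SA * (drazin A + K * drazin Z * H) = A * drazin A := by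
    rw [hSA, hK, hH]
    refine core A (drazin A) D (drazin D) Z (drazin Z) B C hAa haAa hDd hZ ?_
    have h' := h
    rw [hK, hH] at h'
    simpa only [spi] using h'
  have hPP : (A * drazin A) * (A * drazin A) = A * drazin A := by
    simp only [Matrix.mul_assoc, rw1, rw2, rw2']
  have hPS : (A * drazin A) * SA = SA := by
    rw [hSA]
    simp only [Matrix.mul_sub, Matrix.sub_mul, Matrix.mul_add, Matrix.add_mul,
      Matrix.mul_assoc, rw1, rw2, rw2']
  have hSP : SA * (A * drazin A) = SA := by
    rw [hSA]
    simp only [Matrix.mul_sub, Matrix.sub_mul, Matrix.mul_add, Matrix.add_mul,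
      Matrix.mul_assoc, rw1, rw2, rw2']
  have hPG : (A * drazin A) * (drazin A + K * drazin Z * H) =
      drazin A + K * drazin Z * H := by
    rw [hK, hH]
    simp only [Matrix.mul_add, Matrix.mul_assoc, rw1, rw2, rw2']
  have hEE : ((drazin A + K * drazin Z * H) * SA) * ((drazin A + K * drazin Z * H) * SA) =
      (drazin A + K * drazin Z * H) * SA := by
    calc ((drazin A + K * drazin Z * H) * SA) * ((drazin A + K * drazin Z * H) * SA)
        = (drazin A + K * drazin Z * H) * ((SA * (drazin A + K * drazin Z * H)) * SA) := by
          simp only [Matrix.mul_assoc]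
      _ = (drazin A + K * drazin Z * H) * ((A * drazin A) * SA) := by rw [hSG]
      _ = (drazin A + K * drazin Z * H) * SA := by rw [hPS]
  have hPE : (A * drazin A) * ((drazin A + K * drazin Z * H) * SA) =
      (drazin A + K * drazin Z * H) * SA := by
    rw [← Matrix.mul_assoc, hPG]
  have hEP : ((drazin A + K * drazin Z * H) * SA) * (A * drazin A) =
      (drazin A + K * drazin Z * H) * SA := by
    rw [Matrix.mul_assoc, hSP]
  have htr : (A * drazin A - (drazin A + K * drazin Z * H) * SA).trace = 0 := by
    rw [Matrix.trace_sub, Matrix.trace_mul_comm (drazin A + K * drazin Z * H) SA, hSG,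
      sub_self]
  have hQidem : (A * drazin A - (drazin A + K * drazin Z * H) * SA) *
      (A * drazin A - (drazin A + K * drazin Z * H) * SA) =
      A * drazin A - (drazin A + K * drazin Z * H) * SA := by
    rw [Matrix.sub_mul, Matrix.mul_sub, Matrix.mul_sub, hPP, hPE, hEP, hEE, sub_self,
      sub_zero]
  have hQ0 : A * drazin A - (drazin A + K * drazin Z * H) * SA = 0 :=
    idem_eq_zero_of_trace_eq_zero _ hQidem htr
  have hGS : (drazin A + K * drazin Z * H) * SA = A * drazin A :=
    (sub_eq_zero.mp hQ0).symm
  refine ⟨?_, ?_, ?_⟩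
  · rw [hSG, hPS]
  · rw [hGS, hPG]
  · rw [hSG, hGS]
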